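/- Let N ≥ 3 be a prime and let M_k(N) be the N^k × N^k matrices over ZMod N defined recursively as above. Then for every k ≥ 1, no two distinct rows of M_k(N) are N-ary complements, and no two distinct columns of M_k(N) are N-ary complements. -/

import Mathlib

/-- The `N × N` matrix `M_1(N)` over `ZMod N` with entries
`m_{ij} = i + Σ_{l=1}^{j-i} (N - l + 1) (mod N)` for `i ≤ j`, and `m_{ij} = m_{ji}` for `i > j`. -/
def M1 (N : ℕ) (i j : ℕ) : ZMod N :=
  if i ≤ j then ((i + ∑ l ∈ Finset.Icc 1 (j - i), (N - l + 1) : ℕ) : ZMod N)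
  else ((j + ∑ l ∈ Finset.Icc 1 (i - j), (N - l + 1) : ℕ) : ZMod N)

/-- The recursively defined `N^k × N^k` matrices `M_k(N)`: the entry of `M_{k+1}(N)` at
position `(i·N^k + p, j·N^k + q)` is `M_k(N)_{pq} + M_1(N)_{ij}`; the base case `k = 0` is the
`1 × 1` zero matrix, so that `M_1(N)` is recovered at `k = 1`. -/
def Mk (N : ℕ) : ℕ → ℕ → ℕ → ZMod N
  | 0, _, _ => 0
  | k + 1, a, b => Mk N k (a % N ^ k) (b % N ^ k) + M1 N (a / N ^ k) (b / N ^ k)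

/-- Two vectors `x, y` with entries in `ZMod N` are `N`-ary complements if there is a
permutation `f` of `ZMod N` with `f (x i) = y i` for all `i` and `f (x i) ≠ x i` for some `i`. -/
def NaryComplement (N : ℕ) {n : ℕ} (x y : Fin n → ZMod N) : Prop :=
  ∃ f : Equiv.Perm (ZMod N), (∀ i, f (x i) = y i) ∧ ∃ i, f (x i) ≠ x i

lemma sum_cast_aux (N : ℕ) : ∀ d : ℕ, d < N →
    (2 : ZMod N) * (∑ l ∈ Finset.Icc 1 d, (((N - l : ℕ) : ZMod N) + 1)) = (d : ZMod N) - d ^ 2 := by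
  intro d
  induction d with
  | zero => simp
  | succ d ih =>
    intro hd
    rw [Finset.sum_Icc_succ_top (by omega)]
    have h2 : ((N - (d + 1) : ℕ) : ZMod N) = - (d : ZMod N) - 1 := by
      rw [Nat.cast_sub (by omega), ZMod.natCast_self]; push_cast; ring
    rw [mul_add, ih (by omega), h2]
    push_cast
    ring

lemma two_mul_M1_le (N i j : ℕ) (hij : i ≤ j) (hj : j < N) :
    (2 : ZMod N) * M1 N i j = ((i : ZMod N) + j) - ((i : ZMod N) - j) ^ 2 := by
  rw [M1, if_pos hij]
  push_cast
  rw [mul_add, sum_cast_aux N (j - i) (by omega), Nat.cast_sub hij]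
  ring

lemma M1_symm (N i j : ℕ) : M1 N i j = M1 N j i := by
  unfold M1
  rcases le_or_gt i j with h | h
  · rcases le_or_gt j i with h' | h'
    · have : i = j := le_antisymm h h'
      simp [this]
    · rw [if_pos h, if_neg (by omega)]
  · rw [if_neg (by omega), if_pos (le_of_lt h)]

lemma two_mul_M1 (N i j : ℕ) (hi : i < N) (hj : j < N) :
    (2 : ZMod N) * M1 N i j = ((i : ZMod N) + j) - ((i : ZMod N) - j) ^ 2 := by
  rcases le_total i j with h | h
  · exact two_mul_M1_le N i j h hj
  · rw [M1_symm, two_mul_M1_le N j i h hi]; ring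

lemma M1_key1 (N : ℕ) (hN : 3 ≤ N) (hNp : N.Prime) (a : ℕ) (ha : a < N) :
    M1 N a a = M1 N a ((a + 1) % N) := by
  haveI : Fact N.Prime := ⟨hNp⟩
  have h2 : (2 : ZMod N) ≠ 0 := by
    have : ((2 : ℕ) : ZMod N) ≠ 0 := by
      rw [Ne, ZMod.natCast_eq_zero_iff]
      intro h
      exact absurd (Nat.le_of_dvd (by norm_num) h) (by omega)
    simpa using this
  apply mul_left_cancel₀ h2
  rw [two_mul_M1 N a a ha ha, two_mul_M1 N a ((a + 1) % N) ha (Nat.mod_lt _ (by omega)),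
    ZMod.natCast_mod]
  push_cast
  ring

lemma M1_key2 (N : ℕ) (hN : 3 ≤ N) (hNp : N.Prime) (a b : ℕ) (ha : a < N) (hb : b < N)
    (hab : a ≠ b) : M1 N b a ≠ M1 N b ((a + 1) % N) := by
  haveI : Fact N.Prime := ⟨hNp⟩
  have h2 : (2 : ZMod N) ≠ 0 := by
    have : ((2 : ℕ) : ZMod N) ≠ 0 := by
      rw [Ne, ZMod.natCast_eq_zero_iff]
      intro h
      exact absurd (Nat.le_of_dvd (by norm_num) h) (by omega)
    simpa using this
  intro h
  have h' := congrArg (fun x => (2 : ZMod N) * x) h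
  rw [two_mul_M1 N b a hb ha, two_mul_M1 N b ((a + 1) % N) hb (Nat.mod_lt _ (by omega)),
    ZMod.natCast_mod] at h'
  push_cast at h'
  have key : (2 : ZMod N) * ((a : ZMod N) - b) = 0 := by linear_combination h'
  rcases mul_eq_zero.mp key with h0 | h0
  · exact h2 h0
  · have : (a : ZMod N) = b := by linear_combination h0
    have := congrArg ZMod.val this
    rw [ZMod.val_natCast_of_lt ha, ZMod.val_natCast_of_lt hb] at this
    exact hab this

lemma Mk_symm (N : ℕ) : ∀ k a b, Mk N k a b = Mk N k b a := by
  intro k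
  induction k with
  | zero => intro a b; rfl
  | succ k ih => intro a b; rw [Mk, Mk, ih, M1_symm]

lemma Mk_diff (N : ℕ) (hN : 2 ≤ N) : ∀ k m a u v : ℕ, m < k → a < N ^ k → u < N → v < N →
    Mk N k a (u * N ^ m) - Mk N k a (v * N ^ m)
      = M1 N (a / N ^ m % N) u - M1 N (a / N ^ m % N) v := by
  intro k
  induction k with
  | zero => intro m a u v hm; omega
  | succ k ih =>
    intro m a u v hm ha hu hv
    have hNk : 0 < N ^ k := pow_pos (by omega : 0 < N) k
    rcases Nat.lt_succ_iff_lt_or_eq.mp hm with hmk | hmk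
    · -- m < k
      have hu' : u * N ^ m < N ^ k := by
        calc u * N ^ m < N * N ^ m := by
              exact (Nat.mul_lt_mul_right (pow_pos (by omega : 0 < N) m)).mpr hu
          _ = N ^ (m + 1) := by ring
          _ ≤ N ^ k := Nat.pow_le_pow_right (by omega) hmk
      have hv' : v * N ^ m < N ^ k := by
        calc v * N ^ m < N * N ^ m := by
              exact (Nat.mul_lt_mul_right (pow_pos (by omega : 0 < N) m)).mpr hv
          _ = N ^ (m + 1) := by ring
          _ ≤ N ^ k := Nat.pow_le_pow_right (by omega) hmk
      rw [Mk, Mk, Nat.mod_eq_of_lt hu', Nat.mod_eq_of_lt hv',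
        Nat.div_eq_of_lt hu', Nat.div_eq_of_lt hv']
      have hdig : a % N ^ k / N ^ m % N = a / N ^ m % N := by
        rw [← Nat.mod_mul_right_div_self, ← Nat.mod_mul_right_div_self,
          Nat.mod_mod_of_dvd a (by rw [← pow_succ]; exact pow_dvd_pow N hmk)]
      have := ih m (a % N ^ k) u v hmk (Nat.mod_lt a hNk) hu hv
      rw [hdig] at this
      calc Mk N k (a % N ^ k) (u * N ^ m) + M1 N (a / N ^ k) 0
            - (Mk N k (a % N ^ k) (v * N ^ m) + M1 N (a / N ^ k) 0)
          = Mk N k (a % N ^ k) (u * N ^ m) - Mk N k (a % N ^ k) (v * N ^ m) := by ring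
        _ = _ := this
    · -- m = k
      subst hmk
      have hdiva : a / N ^ m < N := by
        rw [Nat.div_lt_iff_lt_mul (pow_pos (by omega : 0 < N) m)]
        calc a < N ^ (m + 1) := ha
          _ = N * N ^ m := by ring
      rw [Mk, Mk, Nat.mul_mod_left, Nat.mul_mod_left,
        Nat.mul_div_cancel u (pow_pos (by omega : 0 < N) m),
        Nat.mul_div_cancel v (pow_pos (by omega : 0 < N) m),
        Nat.mod_eq_of_lt hdiva]
      ring

lemma exists_digit_ne (N : ℕ) (hN : 1 < N) : ∀ k i j : ℕ, i < N ^ k → j < N ^ k → i ≠ j →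
    ∃ m, m < k ∧ i / N ^ m % N ≠ j / N ^ m % N := by
  intro k
  induction k with
  | zero => intro i j hi hj hij; rw [pow_zero] at hi hj; omega
  | succ k ih =>
    intro i j hi hj hij
    by_cases h0 : i % N = j % N
    · have hiN : i / N < N ^ k := by
        rw [Nat.div_lt_iff_lt_mul (by omega)]
        calc i < N ^ (k + 1) := hi
          _ = N ^ k * N := by ring
      have hjN : j / N < N ^ k := by
        rw [Nat.div_lt_iff_lt_mul (by omega)]
        calc j < N ^ (k + 1) := hj
          _ = N ^ k * N := by ring
      have hne : i / N ≠ j / N := by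
        intro h
        apply hij
        have d1 := Nat.div_add_mod i N
        have d2 := Nat.div_add_mod j N
        rw [h] at d1
        omega
      obtain ⟨m, hm, hd⟩ := ih (i / N) (j / N) hiN hjN hne
      refine ⟨m + 1, by omega, ?_⟩
      have e1 : i / N ^ (m + 1) = i / N / N ^ m := by
        rw [Nat.div_div_eq_div_mul, pow_succ']
      have e2 : j / N ^ (m + 1) = j / N / N ^ m := by
        rw [Nat.div_div_eq_div_mul, pow_succ']
      rw [e1, e2]; exact hd
    · exact ⟨0, by omega, by simpa using h0⟩

theorem Mk_no_complementary_rows_or_cols (N : ℕ) (hN : 3 ≤ N) (hNp : N.Prime)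
    (k : ℕ) (hk : 1 ≤ k) (i j : Fin (N ^ k)) (hij : i ≠ j) :
    ¬ NaryComplement N (fun t : Fin (N ^ k) => Mk N k i t) (fun t : Fin (N ^ k) => Mk N k j t) ∧
    ¬ NaryComplement N (fun t : Fin (N ^ k) => Mk N k t i) (fun t : Fin (N ^ k) => Mk N k t j) := by
  suffices h : ∀ i j : Fin (N ^ k), i ≠ j →
      ¬ NaryComplement N (fun t : Fin (N ^ k) => Mk N k i t) (fun t : Fin (N ^ k) => Mk N k j t) by
    constructor
    · exact h i j hij
    · have e1 : (fun t : Fin (N ^ k) => Mk N k t i) = fun t : Fin (N ^ k) => Mk N k i t := by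
        funext t; exact Mk_symm N k t i
      have e2 : (fun t : Fin (N ^ k) => Mk N k t j) = fun t : Fin (N ^ k) => Mk N k j t := by
        funext t; exact Mk_symm N k t j
      rw [e1, e2]
      exact h i j hij
  intro i j hij hcomp
  obtain ⟨f, hf, -⟩ := hcomp
  have hij' : (i : ℕ) ≠ (j : ℕ) := fun h => hij (Fin.ext h)
  obtain ⟨m, hm, hd⟩ := exists_digit_ne N (by omega) k i j i.isLt j.isLt hij'
  set a := (i : ℕ) / N ^ m % N with haDef
  set b := (j : ℕ) / N ^ m % N with hbDef
  have ha : a < N := Nat.mod_lt _ (by omega)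
  have hb : b < N := Nat.mod_lt _ (by omega)
  have ha1 : (a + 1) % N < N := Nat.mod_lt _ (by omega)
  have hlt : ∀ u : ℕ, u < N → u * N ^ m < N ^ k := by
    intro u hu
    calc u * N ^ m < N * N ^ m := (Nat.mul_lt_mul_right (pow_pos (by omega : 0 < N) m)).mpr hu
      _ = N ^ (m + 1) := by ring
      _ ≤ N ^ k := Nat.pow_le_pow_right (by omega) (by omega)
  set t : Fin (N ^ k) := ⟨a * N ^ m, hlt a ha⟩ with htDef
  set s : Fin (N ^ k) := ⟨(a + 1) % N * N ^ m, hlt _ ha1⟩ with hsDef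
  have e1 : Mk N k i t - Mk N k i s = M1 N a a - M1 N a ((a + 1) % N) :=
    Mk_diff N (by omega) k m i a ((a + 1) % N) hm i.isLt ha ha1
  have e2 : Mk N k j t - Mk N k j s = M1 N b a - M1 N b ((a + 1) % N) :=
    Mk_diff N (by omega) k m j a ((a + 1) % N) hm j.isLt ha ha1
  have h1 : Mk N k i t = Mk N k i s := by
    have := M1_key1 N hN hNp a ha
    rw [this, sub_self] at e1
    exact sub_eq_zero.mp e1
  have h2 : Mk N k j t ≠ Mk N k j s := by
    intro h
    rw [h, sub_self] at e2
    exact M1_key2 N hN hNp a b ha hb hd (sub_eq_zero.mp e2.symm)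
  have hft := hf t
  have hfs := hf s
  simp only at hft hfs
  exact h2 (by rw [← hft, ← hfs, h1])
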